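/- Let H be a connected unicyclic graph. Then there exists a tree T on the same vertex set V(H) such that Δ(T) ≤ Δ(H) and every edge of H is an edge of T², the square of T. -/

import Mathlib

open scoped Classical

namespace UITS

variable {V : Type*}

lemma reachable_transfer {G G' : SimpleGraph V}
    (h : ∀ a b, G.Adj a b → G'.Reachable a b) {a b : V} (hr : G.Reachable a b) :
    G'.Reachable a b := by
  obtain ⟨w⟩ := hr
  induction w with
  | nil => exact SimpleGraph.Reachable.refl _
  | cons h' p ih => exact (h _ _ h').trans ih

lemma exists_tree_le [Fintype V] (G : SimpleGraph V) (hc : G.Connected) :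
    ∃ T, T ≤ G ∧ T.IsTree := by
  classical
  suffices H : ∀ n (G : SimpleGraph V), G.Connected → G.edgeSet.ncard = n →
      ∃ T, T ≤ G ∧ T.IsTree from H _ G hc rfl
  intro n
  induction n using Nat.strong_induction_on with
  | _ n ih =>
    intro G hc hn
    by_cases ha : G.IsAcyclic
    · exact ⟨G, le_rfl, ⟨hc, ha⟩⟩
    · rw [SimpleGraph.isAcyclic_iff_forall_adj_isBridge] at ha
      push_neg at ha
      obtain ⟨v, w, hadj, hnb⟩ := ha
      rw [SimpleGraph.isBridge_iff] at hnb
      push_neg at hnb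
      have hreach : (G \ SimpleGraph.fromEdgeSet {s(v, w)}).Reachable v w := hnb
      set G' := G \ SimpleGraph.fromEdgeSet {s(v, w)} with hG'
      have hG'adj : ∀ a b, G'.Adj a b ↔ G.Adj a b ∧ s(a, b) ≠ s(v, w) := by
        intro a b
        rw [hG', SimpleGraph.sdiff_adj, SimpleGraph.fromEdgeSet_adj]
        constructor
        · rintro ⟨h1, h2⟩
          exact ⟨h1, fun hh => h2 ⟨by simp [hh], h1.ne⟩⟩
        · rintro ⟨h1, h2⟩
          exact ⟨h1, fun hh => h2 (by simpa using hh.1)⟩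
      have hG'le : G' ≤ G := by
        intro a b hab
        exact ((hG'adj a b).1 hab).1
      have hG'conn : G'.Connected := by
        haveI : Nonempty V := hc.nonempty
        refine SimpleGraph.Connected.mk (fun a b => reachable_transfer ?_ (hc.preconnected a b))
        intro a b hab
        by_cases he : s(a, b) = s(v, w)
        · rw [Sym2.eq_iff] at he
          rcases he with ⟨rfl, rfl⟩ | ⟨rfl, rfl⟩
          · exact hreach
          · exact hreach.symm
        · exact SimpleGraph.Adj.reachable ((hG'adj a b).2 ⟨hab, he⟩)
      have hcardlt : G'.edgeSet.ncard < n := by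
        rw [← hn]
        apply Set.ncard_lt_ncard ?_ (Set.toFinite _)
        rw [Set.ssubset_iff_of_subset (SimpleGraph.edgeSet_mono hG'le)]
        refine ⟨s(v, w), (by simpa using hadj), fun hmem => ?_⟩
        exact ((hG'adj v w).1 (by simpa using hmem)).2 rfl
      obtain ⟨T, hTle, hT⟩ := ih _ hcardlt G' hG'conn rfl
      exact ⟨T, hTle.trans hG'le, hT⟩

lemma isPath_getVert_inj {G : SimpleGraph V} {u v : V} (p : G.Walk u v) :
    p.IsPath → ∀ i j, i ≤ p.length → j ≤ p.length → p.getVert i = p.getVert j → i = j := by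
  induction p with
  | nil => intro _ i j hi hj _; simp only [SimpleGraph.Walk.length_nil] at hi hj; omega
  | @cons a c d h q ih =>
    intro hp i j hi hj heq
    rw [SimpleGraph.Walk.cons_isPath_iff] at hp
    simp only [SimpleGraph.Walk.length_cons] at hi hj
    match i, j with
    | 0, 0 => rfl
    | 0, (j + 1) =>
      exfalso
      apply hp.2
      rw [SimpleGraph.Walk.mem_support_iff_exists_getVert]
      refine ⟨j, ?_, by omega⟩
      simpa [SimpleGraph.Walk.getVert_cons_succ, SimpleGraph.Walk.getVert_zero] using heq.symm
    | (i + 1), 0 =>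
      exfalso
      apply hp.2
      rw [SimpleGraph.Walk.mem_support_iff_exists_getVert]
      refine ⟨i, ?_, by omega⟩
      simpa [SimpleGraph.Walk.getVert_cons_succ, SimpleGraph.Walk.getVert_zero] using heq
    | (i + 1), (j + 1) =>
      have := ih hp.1 i j (by omega) (by omega)
        (by simpa [SimpleGraph.Walk.getVert_cons_succ] using heq)
      omega

/-- the "path edge" relation along `pv 0, pv 1, ..., pv ℓ`. -/
def pe (ℓ : ℕ) (pv : ℕ → V) (a b : V) : Prop :=
  ∃ i, i < ℓ ∧ ((a = pv i ∧ b = pv (i + 1)) ∨ (b = pv i ∧ a = pv (i + 1)))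

lemma pe_symm {ℓ : ℕ} {pv : ℕ → V} {a b : V} (h : pe ℓ pv a b) : pe ℓ pv b a := by
  obtain ⟨i, hi, h⟩ := h
  exact ⟨i, hi, h.symm⟩

/-- the zigzag reindexing function. -/
def zf (ℓ j : ℕ) : ℕ := if j % 2 = 0 then j / 2 else ℓ - j / 2

/-- zigzag vertex sequence. -/
def zv (ℓ : ℕ) (pv : ℕ → V) (j : ℕ) : V := pv (zf ℓ j)

lemma zf_le {ℓ j : ℕ} (h : j ≤ ℓ) : zf ℓ j ≤ ℓ := by
  simp only [zf]; split_ifs <;> omega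

lemma zf_succ_ne {ℓ j : ℕ} (h : j < ℓ) : zf ℓ j ≠ zf ℓ (j + 1) := by
  simp only [zf]; split_ifs <;> omega

lemma zf_inj {ℓ i j : ℕ} (hi : i ≤ ℓ) (hj : j ≤ ℓ) (h : zf ℓ i = zf ℓ j) : i = j := by
  simp only [zf] at h; split_ifs at h <;> omega

lemma zv_eq {ℓ : ℕ} (pv : ℕ → V) {j k : ℕ} (h : zf ℓ j = k) : zv ℓ pv j = pv k := by
  rw [zv, h]

/-- The rewired graph: delete the path edges, add the zigzag edges. -/
def rewire (T' : SimpleGraph V) (ℓ : ℕ) (pv : ℕ → V) : SimpleGraph V where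
  Adj a b := a ≠ b ∧ ((T'.Adj a b ∧ ¬ pe ℓ pv a b) ∨ pe ℓ (zv ℓ pv) a b)
  symm := ⟨by
    rintro a b ⟨hne, h | h⟩
    · exact ⟨hne.symm, Or.inl ⟨h.1.symm, fun hh => h.2 (pe_symm hh)⟩⟩
    · exact ⟨hne.symm, Or.inr (pe_symm h)⟩⟩
  loopless := ⟨fun a h => h.1 rfl⟩

lemma rewire_adj {T' : SimpleGraph V} {ℓ : ℕ} {pv : ℕ → V} {a b : V} :
    (rewire T' ℓ pv).Adj a b ↔
      a ≠ b ∧ ((T'.Adj a b ∧ ¬ pe ℓ pv a b) ∨ pe ℓ (zv ℓ pv) a b) := Iff.rfl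

section

variable {T' : SimpleGraph V} {ℓ : ℕ} {pv : ℕ → V}

lemma rewire_zadj (hinj : ∀ i j, i ≤ ℓ → j ≤ ℓ → pv i = pv j → i = j)
    {j : ℕ} (hj : j < ℓ) :
    (rewire T' ℓ pv).Adj (zv ℓ pv j) (zv ℓ pv (j + 1)) := by
  refine ⟨fun hh => zf_succ_ne hj (hinj _ _ (zf_le (by omega)) (zf_le (by omega)) hh), ?_⟩
  exact Or.inr ⟨j, hj, Or.inl ⟨rfl, rfl⟩⟩

lemma rewire_adj_ends (hinj : ∀ i j, i ≤ ℓ → j ≤ ℓ → pv i = pv j → i = j)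
    (hl : 0 < ℓ) : (rewire T' ℓ pv).Adj (pv 0) (pv ℓ) := by
  have h := rewire_zadj (T' := T') hinj hl
  rw [zv_eq pv (by simp [zf] : zf ℓ 0 = 0),
    zv_eq pv (by simp [zf] : zf ℓ 1 = ℓ)] at h
  exact h

lemma rewire_path_sq (hinj : ∀ i j, i ≤ ℓ → j ≤ ℓ → pv i = pv j → i = j)
    {i : ℕ} (hi : i < ℓ) :
    (rewire T' ℓ pv).Adj (pv i) (pv (i + 1)) ∨
      ∃ c, (rewire T' ℓ pv).Adj (pv i) c ∧ (rewire T' ℓ pv).Adj c (pv (i + 1)) := by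
  have hz : ∀ j k : ℕ, zf ℓ j = k → zv ℓ pv j = pv k := by
    intro j k h; rw [zv, h]
  rcases le_or_gt (2 * i + 2) ℓ with hA | hB
  · right
    refine ⟨zv ℓ pv (2 * i + 1), ?_, ?_⟩
    · have h := rewire_zadj (T' := T') hinj (j := 2 * i) (by omega)
      rwa [hz (2 * i) i (by simp only [zf]; split_ifs <;> omega)] at h
    · have h := rewire_zadj (T' := T') hinj (j := 2 * i + 1) (by omega)
      rwa [show 2 * i + 1 + 1 = 2 * (i + 1) by ring,
        hz (2 * (i + 1)) (i + 1) (by simp only [zf]; split_ifs <;> omega)] at h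
  · by_cases h1 : ℓ = 2 * i + 1
    · left
      have h := rewire_zadj (T' := T') hinj (j := 2 * i) (by omega)
      rwa [hz (2 * i) i (by simp only [zf]; split_ifs <;> omega),
        hz (2 * i + 1) (i + 1) (by simp only [zf]; split_ifs <;> omega)] at h
    · by_cases h2 : ℓ = 2 * i
      · left
        have hi1 : 1 ≤ i := by omega
        have h := rewire_zadj (T' := T') hinj (j := 2 * (i - 1) + 1) (by omega)
        rw [hz (2 * (i - 1) + 1) (i + 1) (by simp only [zf]; split_ifs <;> omega),
          show 2 * (i - 1) + 1 + 1 = 2 * i by omega,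
          hz (2 * i) i (by simp only [zf]; split_ifs <;> omega)] at h
        exact h.symm
      · -- ℓ < 2 * i
        right
        refine ⟨zv ℓ pv (2 * (ℓ - i - 1) + 1 + 1), ?_, ?_⟩
        · have h := rewire_zadj (T' := T') hinj (j := 2 * (ℓ - i - 1) + 1 + 1) (by omega)
          rw [show 2 * (ℓ - i - 1) + 1 + 1 + 1 = 2 * (ℓ - i) + 1 by omega,
            hz (2 * (ℓ - i) + 1) i (by simp only [zf]; split_ifs <;> omega)] at h
          exact h.symm
        · have h := rewire_zadj (T' := T') hinj (j := 2 * (ℓ - i - 1) + 1) (by omega)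
          rw [hz (2 * (ℓ - i - 1) + 1) (i + 1) (by simp only [zf]; split_ifs <;> omega)] at h
          exact h.symm

lemma rewire_connected (hinj : ∀ i j, i ≤ ℓ → j ≤ ℓ → pv i = pv j → i = j)
    (hadj : ∀ i, i < ℓ → T'.Adj (pv i) (pv (i + 1))) (hc : T'.Connected) :
    (rewire T' ℓ pv).Connected := by
  have hreach0 : ∀ j, j ≤ ℓ → (rewire T' ℓ pv).Reachable (pv 0) (zv ℓ pv j) := by
    intro j
    induction j with
    | zero =>
      intro _
      rw [zv_eq pv (by simp [zf] : zf ℓ 0 = 0)]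
    | succ k ihk =>
      intro hk
      exact (ihk (by omega)).trans (rewire_zadj (T' := T') hinj (by omega)).reachable
  have hreachp : ∀ i, i ≤ ℓ → (rewire T' ℓ pv).Reachable (pv 0) (pv i) := by
    intro i hi
    rcases le_or_gt (2 * i) ℓ with h | h
    · have hh := hreach0 (2 * i) h
      rwa [zv_eq pv (by simp only [zf]; split_ifs <;> omega : zf ℓ (2 * i) = i)] at hh
    · have hh := hreach0 (2 * (ℓ - i) + 1) (by omega)
      rwa [zv_eq pv (by simp only [zf]; split_ifs <;> omega : zf ℓ (2 * (ℓ - i) + 1) = i)] at hh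
  have key : ∀ a b, T'.Adj a b → (rewire T' ℓ pv).Reachable a b := by
    intro a b hab
    by_cases hpe : pe ℓ pv a b
    · obtain ⟨i, hi, hc'⟩ := hpe
      rcases hc' with ⟨rfl, rfl⟩ | ⟨rfl, rfl⟩
      · exact (hreachp i (by omega)).symm.trans (hreachp (i + 1) (by omega))
      · exact (hreachp (i + 1) (by omega)).symm.trans (hreachp i (by omega))
    · exact SimpleGraph.Adj.reachable ⟨hab.ne, Or.inl ⟨hab, hpe⟩⟩
  haveI : Nonempty V := hc.nonempty
  exact SimpleGraph.Connected.mk (fun a b => reachable_transfer key (hc.preconnected a b))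

lemma rewire_card_le [Fintype V]
    (hinj : ∀ i j, i ≤ ℓ → j ≤ ℓ → pv i = pv j → i = j)
    (hadj : ∀ i, i < ℓ → T'.Adj (pv i) (pv (i + 1))) :
    (rewire T' ℓ pv).edgeFinset.card ≤ T'.edgeFinset.card := by
  classical
  set P : Finset (Sym2 V) := (Finset.range ℓ).image (fun i => s(pv i, pv (i + 1))) with hP
  set Z : Finset (Sym2 V) :=
    (Finset.range ℓ).image (fun j => s(zv ℓ pv j, zv ℓ pv (j + 1))) with hZ
  have hPsub : P ⊆ T'.edgeFinset := by
    intro e he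
    rw [hP, Finset.mem_image] at he
    obtain ⟨i, hi, rfl⟩ := he
    rw [Finset.mem_range] at hi
    exact SimpleGraph.mem_edgeFinset.2 (hadj i hi)
  have hPcard : P.card = ℓ := by
    rw [hP, Finset.card_image_of_injOn, Finset.card_range]
    intro i hi j hj hij
    rw [Finset.mem_coe, Finset.mem_range] at hi hj
    rw [Sym2.eq_iff] at hij
    rcases hij with ⟨h1, h2⟩ | ⟨h1, h2⟩
    · exact hinj _ _ (by omega) (by omega) h1
    · have e1 := hinj _ _ (by omega) (by omega) h1
      have e2 := hinj _ _ (by omega) (by omega) h2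
      omega
  have hZcard : Z.card ≤ ℓ := by
    rw [hZ]
    exact Finset.card_image_le.trans (by rw [Finset.card_range])
  have hsub : (rewire T' ℓ pv).edgeFinset ⊆ (T'.edgeFinset \ P) ∪ Z := by
    intro e
    induction e using Sym2.ind with
    | _ a b =>
      intro he
      rw [SimpleGraph.mem_edgeFinset, SimpleGraph.mem_edgeSet] at he
      rcases he.2 with ⟨hT, hnpe⟩ | hze
      · rw [Finset.mem_union, Finset.mem_sdiff]
        refine Or.inl ⟨SimpleGraph.mem_edgeFinset.2 hT, fun hmem => ?_⟩
        rw [hP, Finset.mem_image] at hmem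
        obtain ⟨i, hi, hie⟩ := hmem
        rw [Finset.mem_range] at hi
        rw [Sym2.eq_iff] at hie
        rcases hie with ⟨h1, h2⟩ | ⟨h1, h2⟩
        · exact hnpe ⟨i, hi, Or.inl ⟨h1.symm, h2.symm⟩⟩
        · exact hnpe ⟨i, hi, Or.inr ⟨h1.symm, h2.symm⟩⟩
      · rw [Finset.mem_union]
        refine Or.inr ?_
        rw [hZ, Finset.mem_image]
        obtain ⟨j, hj, hc⟩ := hze
        refine ⟨j, Finset.mem_range.2 hj, ?_⟩
        rcases hc with ⟨h1, h2⟩ | ⟨h1, h2⟩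
        · rw [h1, h2]
        · rw [h1, h2, Sym2.eq_swap]
  have hlle : ℓ ≤ T'.edgeFinset.card := hPcard ▸ Finset.card_le_card hPsub
  calc (rewire T' ℓ pv).edgeFinset.card ≤ ((T'.edgeFinset \ P) ∪ Z).card :=
        Finset.card_le_card hsub
    _ ≤ (T'.edgeFinset \ P).card + Z.card := Finset.card_union_le _ _
    _ = T'.edgeFinset.card - ℓ + Z.card := by rw [Finset.card_sdiff_of_subset hPsub, hPcard]
    _ ≤ T'.edgeFinset.card := by omega

lemma rewire_degree_le [Fintype V]
    (hinj : ∀ i j, i ≤ ℓ → j ≤ ℓ → pv i = pv j → i = j)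
    (hadj : ∀ i, i < ℓ → T'.Adj (pv i) (pv (i + 1)))
    (hl : 0 < ℓ) (w : V) :
    (rewire T' ℓ pv).degree w ≤
      T'.degree w + (if w = pv 0 ∨ w = pv ℓ then 1 else 0) := by
  classical
  by_cases hw : ∃ i, i ≤ ℓ ∧ pv i = w
  · obtain ⟨i, hi, rfl⟩ := hw
    set g : ℕ := if 2 * i ≤ ℓ then 2 * i else 2 * (ℓ - i) + 1 with hg
    have hgle : g ≤ ℓ := by rw [hg]; split_ifs <;> omega
    have hgf : zf ℓ g = i := by rw [hg]; simp only [zf]; split_ifs <;> omega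
    set PN : Finset V :=
      (if i < ℓ then {pv (i + 1)} else ∅) ∪ (if 0 < i then {pv (i - 1)} else ∅) with hPN
    set ZN : Finset V := {zv ℓ pv (g + 1), zv ℓ pv (g - 1)} with hZN
    have hsub : (rewire T' ℓ pv).neighborFinset (pv i) ⊆
        (T'.neighborFinset (pv i) \ PN) ∪ ZN := by
      intro b hb
      rw [SimpleGraph.mem_neighborFinset] at hb
      rcases hb.2 with ⟨hT, hnpe⟩ | hze
      · rw [Finset.mem_union, Finset.mem_sdiff]
        refine Or.inl ⟨(SimpleGraph.mem_neighborFinset _ _ _).2 hT, fun hmem => ?_⟩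
        rw [hPN, Finset.mem_union] at hmem
        rcases hmem with hmem | hmem
        · split_ifs at hmem with hcond
          · rw [Finset.mem_singleton] at hmem
            exact hnpe ⟨i, hcond, Or.inl ⟨rfl, hmem⟩⟩
          · exact absurd hmem (Finset.notMem_empty _)
        · split_ifs at hmem with hcond
          · rw [Finset.mem_singleton] at hmem
            refine hnpe ⟨i - 1, by omega, Or.inr ⟨hmem, ?_⟩⟩
            congr 1
            omega
          · exact absurd hmem (Finset.notMem_empty _)
      · rw [Finset.mem_union]
        refine Or.inr ?_
        obtain ⟨j, hj, hc⟩ := hze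
        rw [hZN, Finset.mem_insert, Finset.mem_singleton]
        rcases hc with ⟨h1, h2⟩ | ⟨h1, h2⟩
        · have hje : j = g := by
            apply zf_inj (by omega) hgle
            rw [hgf]
            exact hinj _ _ (zf_le (by omega)) hi h1.symm
          rw [h2, hje]
          exact Or.inl rfl
        · have hje : j + 1 = g := by
            apply zf_inj (by omega) hgle
            rw [hgf]
            exact hinj _ _ (zf_le (by omega)) hi h2.symm
          rw [h1, show j = g - 1 by omega]
          exact Or.inr rfl
    have hPNsub : PN ⊆ T'.neighborFinset (pv i) := by
      intro b hb
      rw [hPN, Finset.mem_union] at hb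
      rw [SimpleGraph.mem_neighborFinset]
      rcases hb with hb | hb
      · split_ifs at hb with hcond
        · rw [Finset.mem_singleton] at hb
          rw [hb]
          exact hadj i hcond
        · exact absurd hb (Finset.notMem_empty _)
      · split_ifs at hb with hcond
        · rw [Finset.mem_singleton] at hb
          rw [hb]
          have := hadj (i - 1) (by omega)
          rw [show i - 1 + 1 = i by omega] at this
          exact this.symm
        · exact absurd hb (Finset.notMem_empty _)
    have hZNcard : ZN.card ≤ 2 := by
      rw [hZN]
      exact (Finset.card_insert_le _ _).trans (by simp)
    have hPNcard : 2 ≤ PN.card + (if pv i = pv 0 ∨ pv i = pv ℓ then 1 else 0) := by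
      by_cases h0 : i = 0
      · rw [hPN, if_pos (by omega), if_neg (by omega), if_pos (Or.inl (by rw [h0]))]
        simp
      · by_cases hLast : i = ℓ
        · rw [hPN, if_neg (by omega), if_pos (by omega), if_pos (Or.inr (by rw [hLast]))]
          simp
        · have hne' : pv (i + 1) ≠ pv (i - 1) := fun hh => by
            have := hinj _ _ (by omega) (by omega) hh
            omega
          have h1 : PN.card = 2 := by
            rw [hPN, if_pos (by omega), if_pos (by omega),
              Finset.card_union_of_disjoint (Finset.disjoint_singleton.2 hne')]
            simp
          omega
    have hdeg : (rewire T' ℓ pv).degree (pv i) ≤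
        (T'.neighborFinset (pv i)).card - PN.card + ZN.card := by
      calc (rewire T' ℓ pv).degree (pv i) ≤ ((T'.neighborFinset (pv i) \ PN) ∪ ZN).card :=
            Finset.card_le_card hsub
        _ ≤ (T'.neighborFinset (pv i) \ PN).card + ZN.card := Finset.card_union_le _ _
        _ = (T'.neighborFinset (pv i)).card - PN.card + ZN.card := by
            rw [Finset.card_sdiff_of_subset hPNsub]
    have hPNle : PN.card ≤ (T'.neighborFinset (pv i)).card := Finset.card_le_card hPNsub
    have hdegT : T'.degree (pv i) = (T'.neighborFinset (pv i)).card := rfl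
    set ind : ℕ := if pv i = pv 0 ∨ pv i = pv ℓ then 1 else 0 with hind
    rw [hdegT]
    omega
  · have hsub : (rewire T' ℓ pv).neighborFinset w ⊆ T'.neighborFinset w := by
      intro b hb
      rw [SimpleGraph.mem_neighborFinset] at hb
      rcases hb.2 with ⟨hT, _⟩ | hze
      · exact (SimpleGraph.mem_neighborFinset _ _ _).2 hT
      · exfalso
        obtain ⟨j, hj, hc⟩ := hze
        rcases hc with ⟨h1, _⟩ | ⟨_, h2⟩
        · exact hw ⟨zf ℓ j, zf_le (by omega), h1.symm⟩
        · exact hw ⟨zf ℓ (j + 1), zf_le (by omega), h2.symm⟩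
    exact le_trans (Finset.card_le_card hsub) (Nat.le_add_right (T'.degree w) _)

end

end UITS

open scoped Classical in
/-- For a connected unicyclic graph `H` (connected with exactly as many edges as
vertices) there is a tree `T` on the same vertex set with `Δ(T) ≤ Δ(H)` such that
every edge of `H` is an edge of `T²` (i.e. joins vertices at distance at most 2 in `T`). -/
theorem unicyclic_in_tree_square {V : Type*} [Fintype V] (H : SimpleGraph V)
    (hconn : H.Connected) (huni : H.edgeSet.ncard = Fintype.card V) :
    ∃ T : SimpleGraph V, T.IsTree ∧ T.maxDegree ≤ H.maxDegree ∧
      ∀ a b : V, H.Adj a b → (T.Adj a b ∨ ∃ c : V, T.Adj a c ∧ T.Adj c b) := by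
  classical
  obtain ⟨T', hle, hT'⟩ := UITS.exists_tree_le H hconn
  have hcardT' : T'.edgeFinset.card + 1 = Fintype.card V := hT'.card_edgeFinset
  have hcardH : H.edgeFinset.card = Fintype.card V := by
    rw [← huni]
    exact (Set.ncard_eq_toFinset_card' _).symm
  have hsubE : T'.edgeFinset ⊆ H.edgeFinset := SimpleGraph.edgeFinset_mono hle
  have h1 : (H.edgeFinset \ T'.edgeFinset).Nonempty := by
    rw [← Finset.card_pos, Finset.card_sdiff_of_subset hsubE]
    omega
  obtain ⟨e, he⟩ := h1
  rw [Finset.mem_sdiff] at he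
  have hEq : H.edgeFinset = insert e T'.edgeFinset := by
    refine (Finset.eq_of_subset_of_card_le (Finset.insert_subset he.1 hsubE) ?_).symm
    rw [Finset.card_insert_of_notMem he.2]
    omega
  obtain ⟨u, v, rfl⟩ : ∃ u v, e = s(u, v) := by
    induction e using Sym2.ind with
    | _ u v => exact ⟨u, v, rfl⟩
  have huv : H.Adj u v := by simpa using he.1
  have hne : u ≠ v := huv.ne
  have hnT : ¬ T'.Adj u v := fun h => he.2 (by simpa using h)
  obtain ⟨p, hp⟩ : ∃ p : T'.Walk u v, p.IsPath := by
    obtain ⟨w⟩ := hT'.isConnected.preconnected u v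
    exact ⟨w.toPath.1, w.toPath.2⟩
  set ℓ := p.length with hℓ
  set pv : ℕ → V := p.getVert with hpv
  have hinj : ∀ i j, i ≤ ℓ → j ≤ ℓ → pv i = pv j → i = j :=
    UITS.isPath_getVert_inj p hp
  have hadj : ∀ i, i < ℓ → T'.Adj (pv i) (pv (i + 1)) := fun i hi =>
    p.adj_getVert_succ hi
  have hpv0 : pv 0 = u := p.getVert_zero
  have hpvl : pv ℓ = v := p.getVert_length
  have hl : 0 < ℓ := by
    rcases Nat.eq_zero_or_pos ℓ with h | h
    · exact absurd (hpv0 ▸ hpvl ▸ congrArg pv h.symm) hne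
    · exact h
  refine ⟨UITS.rewire T' ℓ pv, ?_, ?_, ?_⟩
  · -- IsTree
    have hconnT := UITS.rewire_connected hinj hadj hT'.isConnected
    obtain ⟨T2, hT2le, hT2⟩ := UITS.exists_tree_le _ hconnT
    have hcT2 : T2.edgeFinset.card + 1 = Fintype.card V := hT2.card_edgeFinset
    have hcR := UITS.rewire_card_le (T' := T') hinj hadj
    have hEq2 : T2.edgeFinset = (UITS.rewire T' ℓ pv).edgeFinset :=
      Finset.eq_of_subset_of_card_le (SimpleGraph.edgeFinset_mono hT2le) (by omega)
    have : T2 = UITS.rewire T' ℓ pv := SimpleGraph.edgeFinset_inj.1 hEq2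
    exact this ▸ hT2
  · -- maxDegree
    apply SimpleGraph.maxDegree_le_of_forall_degree_le
    intro w
    have h1 := UITS.rewire_degree_le (T' := T') hinj hadj hl w
    have h2 : T'.degree w + (if w = pv 0 ∨ w = pv ℓ then 1 else 0) ≤ H.degree w := by
      have hsubN : T'.neighborFinset w ⊆ H.neighborFinset w := by
        intro x hx
        rw [SimpleGraph.mem_neighborFinset] at hx ⊢
        exact hle hx
      split_ifs with h
      · have hex : ∃ o, H.Adj w o ∧ ¬ T'.Adj w o := by
          rcases h with h | h
          · exact ⟨v, (hpv0 ▸ h : w = u) ▸ huv, (hpv0 ▸ h : w = u) ▸ hnT⟩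
          · refine ⟨u, (hpvl ▸ h : w = v) ▸ huv.symm, (hpvl ▸ h : w = v) ▸ fun hh => hnT hh.symm⟩
        obtain ⟨o, hHo, hTo⟩ := hex
        have hss : T'.neighborFinset w ⊂ H.neighborFinset w := by
          rw [Finset.ssubset_iff_of_subset hsubN]
          exact ⟨o, (SimpleGraph.mem_neighborFinset _ _ _).2 hHo,
            fun hh => hTo ((SimpleGraph.mem_neighborFinset _ _ _).1 hh)⟩
        have := Finset.card_lt_card hss
        show (T'.neighborFinset w).card + 1 ≤ (H.neighborFinset w).card
        omega
      · have := Finset.card_le_card hsubN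
        show (T'.neighborFinset w).card + 0 ≤ (H.neighborFinset w).card
        omega
    exact le_trans (h1.trans h2) (H.degree_le_maxDegree w)
  · -- square property
    intro a b hab
    have hmem : s(a, b) ∈ H.edgeFinset := by simpa using hab
    rw [hEq, Finset.mem_insert] at hmem
    rcases hmem with h | h
    · rw [Sym2.eq_iff] at h
      rcases h with ⟨rfl, rfl⟩ | ⟨rfl, rfl⟩
      · exact Or.inl (hpv0 ▸ hpvl ▸ UITS.rewire_adj_ends hinj hl)
      · exact Or.inl (hpv0 ▸ hpvl ▸ (UITS.rewire_adj_ends hinj hl).symm)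
    · have hT : T'.Adj a b := by simpa using h
      by_cases hpe : UITS.pe ℓ pv a b
      · obtain ⟨i, hi, hc⟩ := hpe
        rcases hc with ⟨rfl, rfl⟩ | ⟨rfl, rfl⟩
        · exact UITS.rewire_path_sq hinj hi
        · rcases UITS.rewire_path_sq (T' := T') hinj hi with h' | ⟨c, h1', h2'⟩
          · exact Or.inl h'.symm
          · exact Or.inr ⟨c, h2'.symm, h1'.symm⟩
      · exact Or.inl ⟨hT.ne, Or.inl ⟨hT, hpe⟩⟩
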